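/- Fix μ > 0 and ξ ∈ ℝ³ with ξ ≠ 0 and λ₁(ξ) ≠ λ₂(ξ), and let û₀ ∈ ℂ³ with ξ·û₀ = 0 and Ê₀ ∈ ℂ^{3×3}. Define, for t ≥ 0, û(ξ,t) = ((λ₁e^{λ₁t} − λ₂e^{λ₂t})/(λ₁−λ₂)) û₀ + ((e^{λ₁t} − e^{λ₂t})/(λ₁−λ₂)) (I − ξξᵀ/|ξ|²) iÊ₀ξ, and Ê(ξ,t) = i((e^{λ₁t} − e^{λ₂t})/(λ₁−λ₂)) û₀ξᵀ + ((λ₁e^{λ₂t} − λ₂e^{λ₁t})/(λ₁−λ₂)) (I − ξξᵀ/|ξ|²)Ê₀(ξξᵀ/|ξ|²) + Ê₀ − (I − ξξᵀ/|ξ|²)Ê₀(ξξᵀ/|ξ|²). Then (û,Ê) solves the Fourier-transformed linearized system: ∂_t û = −μ|ξ|²û + i(I − ξξᵀ/|ξ|²)Êξ, ∂_t Ê = iûξᵀ, with initial data (û,Ê)(ξ,0) = (û₀,Ê₀), and iξ·û(ξ,t) = 0 for all t ≥ 0. -/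

import Mathlib

open MeasureTheory Real Set
open scoped ENNReal NNReal

noncomputable section

/-- Frequency space `ℝ³`. -/
abbrev X3 : Type := EuclideanSpace ℝ (Fin 3)

/-- A complex square root. -/
def csqrt (z : ℂ) : ℂ := z ^ ((1:ℂ)/2)

/-- `λ₁(ξ) = (−μ|ξ|² + √(μ²|ξ|⁴ − 4|ξ|²))/2`. -/
def lam1 (μ : ℝ) (ξ : X3) : ℂ :=
  (-(μ : ℂ) * (‖ξ‖ : ℂ) ^ 2 + csqrt ((μ : ℂ) ^ 2 * (‖ξ‖ : ℂ) ^ 4 - 4 * (‖ξ‖ : ℂ) ^ 2)) / 2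

/-- `λ₂(ξ) = (−μ|ξ|² − √(μ²|ξ|⁴ − 4|ξ|²))/2`. -/
def lam2 (μ : ℝ) (ξ : X3) : ℂ :=
  (-(μ : ℂ) * (‖ξ‖ : ℂ) ^ 2 - csqrt ((μ : ℂ) ^ 2 * (‖ξ‖ : ℂ) ^ 4 - 4 * (‖ξ‖ : ℂ) ^ 2)) / 2

/-- The projection `(I − ξξᵀ/|ξ|²) v`. -/
def projPerp (ξ : X3) (v : Fin 3 → ℂ) (i : Fin 3) : ℂ :=
  v i - (ξ i : ℂ) * (∑ k, (ξ k : ℂ) * v k) / ((‖ξ‖ : ℂ) ^ 2)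

/-- `û(ξ,t) = ((λ₁e^{λ₁t} − λ₂e^{λ₂t})/(λ₁−λ₂)) û₀
      + ((e^{λ₁t} − e^{λ₂t})/(λ₁−λ₂)) (I − ξξᵀ/|ξ|²) iÊ₀ξ`. -/
def uhatSol (μ : ℝ) (ξ : X3) (u0 : Fin 3 → ℂ) (E0 : Fin 3 → Fin 3 → ℂ)
    (t : ℝ) (i : Fin 3) : ℂ :=
  ((lam1 μ ξ * Complex.exp (lam1 μ ξ * t) - lam2 μ ξ * Complex.exp (lam2 μ ξ * t))
      / (lam1 μ ξ - lam2 μ ξ)) * u0 i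
  + ((Complex.exp (lam1 μ ξ * t) - Complex.exp (lam2 μ ξ * t)) / (lam1 μ ξ - lam2 μ ξ))
      * projPerp ξ (fun a => Complex.I * ∑ b, E0 a b * (ξ b : ℂ)) i

/-- The matrix `(I − ξξᵀ/|ξ|²) Ê₀ (ξξᵀ/|ξ|²)`. -/
def QE (ξ : X3) (E0 : Fin 3 → Fin 3 → ℂ) (i j : Fin 3) : ℂ :=
  ∑ k, projPerp ξ (fun a => E0 a k) i * ((ξ k : ℂ) * (ξ j : ℂ) / ((‖ξ‖ : ℂ) ^ 2))

/-- `Ê(ξ,t) = i((e^{λ₁t} − e^{λ₂t})/(λ₁−λ₂)) û₀ξᵀ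
      + ((λ₁e^{λ₂t} − λ₂e^{λ₁t})/(λ₁−λ₂)) (I − ξξᵀ/|ξ|²)Ê₀(ξξᵀ/|ξ|²)
      + Ê₀ − (I − ξξᵀ/|ξ|²)Ê₀(ξξᵀ/|ξ|²)`. -/
def EhatSol (μ : ℝ) (ξ : X3) (u0 : Fin 3 → ℂ) (E0 : Fin 3 → Fin 3 → ℂ)
    (t : ℝ) (i j : Fin 3) : ℂ :=
  Complex.I * ((Complex.exp (lam1 μ ξ * t) - Complex.exp (lam2 μ ξ * t))
      / (lam1 μ ξ - lam2 μ ξ)) * u0 i * (ξ j : ℂ)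
  + ((lam1 μ ξ * Complex.exp (lam2 μ ξ * t) - lam2 μ ξ * Complex.exp (lam1 μ ξ * t))
      / (lam1 μ ξ - lam2 μ ξ)) * QE ξ E0 i j
  + E0 i j - QE ξ E0 i j

/- ## Auxiliary lemmas -/

lemma csqrt_sq (z : ℂ) : csqrt z ^ 2 = z := by
  unfold csqrt
  rcases eq_or_ne z 0 with h | h
  · simp [h, Complex.zero_cpow (by norm_num : (1:ℂ)/2 ≠ 0)]
  · rw [sq, ← Complex.cpow_add _ _ h]; norm_num

lemma lam_sum (μ : ℝ) (ξ : X3) : lam1 μ ξ + lam2 μ ξ = -(μ:ℂ) * (‖ξ‖:ℂ)^2 := by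
  unfold lam1 lam2; ring

lemma lam_prod (μ : ℝ) (ξ : X3) : lam1 μ ξ * lam2 μ ξ = (‖ξ‖:ℂ)^2 := by
  unfold lam1 lam2
  linear_combination (-(1:ℂ)/4) * csqrt_sq ((μ : ℂ) ^ 2 * (‖ξ‖ : ℂ) ^ 4 - 4 * (‖ξ‖ : ℂ) ^ 2)

lemma normsq (ξ : X3) : (‖ξ‖:ℂ)^2 = (ξ 0:ℂ)^2 + (ξ 1:ℂ)^2 + (ξ 2:ℂ)^2 := by
  have hre : ‖ξ‖^2 = ξ 0 ^ 2 + ξ 1 ^ 2 + ξ 2 ^ 2 := by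
    rw [EuclideanSpace.norm_eq, Real.sq_sqrt (by positivity)]
    simp [Fin.sum_univ_three, Real.norm_eq_abs, sq_abs]
  rw [← Complex.ofReal_pow, hre]; push_cast; ring

lemma normsq_ne (ξ : X3) (hξ : ξ ≠ 0) : (‖ξ‖:ℂ)^2 ≠ 0 :=
  pow_ne_zero 2 (Complex.ofReal_ne_zero.mpr (norm_ne_zero_iff.mpr hξ))

lemma expAux (l : ℂ) (t : ℝ) :
    HasDerivAt (fun s : ℝ => Complex.exp (l * s)) (l * Complex.exp (l * t)) t := by
  have h : HasDerivAt (fun s : ℝ => l * (s : ℂ)) l t := by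
    simpa using (Complex.ofRealCLM.hasDerivAt (x := t)).const_mul l
  simpa [mul_comm] using h.cexp

lemma projPerp_dot (ξ : X3) (hξ : ξ ≠ 0) (v : Fin 3 → ℂ) :
    ∑ k, (ξ k : ℂ) * projPerp ξ v k = 0 := by
  have hN := normsq_ne ξ hξ
  have hd := normsq ξ
  simp only [projPerp, Fin.sum_univ_three]
  rw [hd] at hN ⊢
  field_simp
  ring

lemma projPerp_of_dot (ξ : X3) (v : Fin 3 → ℂ) (h : ∑ k, (ξ k : ℂ) * v k = 0) (i : Fin 3) :
    projPerp ξ v i = v i := by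
  simp [projPerp, h]

lemma projPerp_lin3 (ξ : X3) (c1 c2 c3 : ℂ) (v w x : Fin 3 → ℂ) (i : Fin 3) :
    projPerp ξ (fun a => c1 * v a + c2 * w a + c3 * x a) i
      = c1 * projPerp ξ v i + c2 * projPerp ξ w i + c3 * projPerp ξ x i := by
  simp only [projPerp, Fin.sum_univ_three]; ring

lemma projPerp_smul (ξ : X3) (c : ℂ) (v : Fin 3 → ℂ) (i : Fin 3) :
    projPerp ξ (fun a => c * v a) i = c * projPerp ξ v i := by
  simp only [projPerp, Fin.sum_univ_three]; ring

lemma QE_mul (ξ : X3) (hξ : ξ ≠ 0) (E0 : Fin 3 → Fin 3 → ℂ) (i j : Fin 3) :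
    ((‖ξ‖:ℂ)^2) * QE ξ E0 i j
      = projPerp ξ (fun a => ∑ b, E0 a b * (ξ b : ℂ)) i * (ξ j : ℂ) := by
  have hN := normsq_ne ξ hξ
  have hN' : (‖ξ‖:ℂ) ≠ 0 := Complex.ofReal_ne_zero.mpr (norm_ne_zero_iff.mpr hξ)
  simp only [QE, projPerp, Fin.sum_univ_three]
  field_simp
  ring

lemma QE_dot (ξ : X3) (hξ : ξ ≠ 0) (E0 : Fin 3 → Fin 3 → ℂ) (a : Fin 3) :
    ∑ b, QE ξ E0 a b * (ξ b : ℂ)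
      = projPerp ξ (fun c => ∑ b, E0 c b * (ξ b : ℂ)) a := by
  have hN := normsq_ne ξ hξ
  have hd := normsq ξ
  simp only [QE, projPerp, Fin.sum_univ_three]
  rw [hd] at hN ⊢
  field_simp
  ring

/-- Lemma 2.3: the explicit formulas `(û, Ê)` solve the Fourier-transformed linearized
incompressible viscoelastic system
`∂ₜû = −μ|ξ|²û + i(I − ξξᵀ/|ξ|²)Êξ`, `∂ₜÊ = iûξᵀ`, with the given initial data, and
remain divergence free: `iξ·û(ξ,t) = 0`. -/
theorem fourier_linearized_solution (μ : ℝ) (hμ : 0 < μ) (ξ : X3) (hξ : ξ ≠ 0)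
    (hne : lam1 μ ξ ≠ lam2 μ ξ) (u0 : Fin 3 → ℂ) (E0 : Fin 3 → Fin 3 → ℂ)
    (hdiv : ∑ i, (ξ i : ℂ) * u0 i = 0) :
    (∀ t : ℝ, 0 ≤ t → ∀ i : Fin 3,
      HasDerivAt (fun s : ℝ => uhatSol μ ξ u0 E0 s i)
        (-(μ : ℂ) * (‖ξ‖ : ℂ) ^ 2 * uhatSol μ ξ u0 E0 t i
          + Complex.I * projPerp ξ (fun a => ∑ b, EhatSol μ ξ u0 E0 t a b * (ξ b : ℂ)) i) t) ∧
    (∀ t : ℝ, 0 ≤ t → ∀ i j : Fin 3,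
      HasDerivAt (fun s : ℝ => EhatSol μ ξ u0 E0 s i j)
        (Complex.I * uhatSol μ ξ u0 E0 t i * (ξ j : ℂ)) t) ∧
    (∀ i, uhatSol μ ξ u0 E0 0 i = u0 i) ∧
    (∀ i j, EhatSol μ ξ u0 E0 0 i j = E0 i j) ∧
    (∀ t : ℝ, 0 ≤ t → Complex.I * ∑ i, (ξ i : ℂ) * uhatSol μ ξ u0 E0 t i = 0) := by
  have hΔ : lam1 μ ξ - lam2 μ ξ ≠ 0 := sub_ne_zero.mpr hne
  have hN := normsq_ne ξ hξ
  have hsum := lam_sum μ ξ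
  have hprod := lam_prod μ ξ
  refine ⟨?_, ?_, ?_, ?_, ?_⟩
  · -- u equation
    intro t ht i
    have h1 := expAux (lam1 μ ξ) t
    have h2 := expAux (lam2 μ ξ) t
    have hu : HasDerivAt (fun s : ℝ => uhatSol μ ξ u0 E0 s i)
        (((lam1 μ ξ * (lam1 μ ξ * Complex.exp (lam1 μ ξ * t))
            - lam2 μ ξ * (lam2 μ ξ * Complex.exp (lam2 μ ξ * t))) / (lam1 μ ξ - lam2 μ ξ))
              * u0 i
          + ((lam1 μ ξ * Complex.exp (lam1 μ ξ * t) - lam2 μ ξ * Complex.exp (lam2 μ ξ * t))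
              / (lam1 μ ξ - lam2 μ ξ))
              * projPerp ξ (fun a => Complex.I * ∑ b, E0 a b * (ξ b : ℂ)) i) t := by
      exact ((((h1.const_mul (lam1 μ ξ)).sub (h2.const_mul (lam2 μ ξ))).div_const
          (lam1 μ ξ - lam2 μ ξ)).mul_const (u0 i)).add
        (((h1.sub h2).div_const (lam1 μ ξ - lam2 μ ξ)).mul_const
          (projPerp ξ (fun a => Complex.I * ∑ b, E0 a b * (ξ b : ℂ)) i))
    convert hu using 1
    -- algebraic identity for the derivative value
    have hEdot : (fun a => ∑ b, EhatSol μ ξ u0 E0 t a b * (ξ b : ℂ))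
        = fun a => (Complex.I * ((Complex.exp (lam1 μ ξ * t) - Complex.exp (lam2 μ ξ * t))
              / (lam1 μ ξ - lam2 μ ξ)) * ((‖ξ‖:ℂ)^2)) * u0 a
          + (((lam1 μ ξ * Complex.exp (lam2 μ ξ * t) - lam2 μ ξ * Complex.exp (lam1 μ ξ * t))
              / (lam1 μ ξ - lam2 μ ξ)) - 1)
              * projPerp ξ (fun c => ∑ b, E0 c b * (ξ b : ℂ)) a
          + 1 * (∑ b, E0 a b * (ξ b : ℂ)) := by
      funext a
      have h1' : ∑ b, EhatSol μ ξ u0 E0 t a b * (ξ b : ℂ)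
          = Complex.I * ((Complex.exp (lam1 μ ξ * t) - Complex.exp (lam2 μ ξ * t))
              / (lam1 μ ξ - lam2 μ ξ)) * u0 a * ((ξ 0:ℂ)^2 + (ξ 1:ℂ)^2 + (ξ 2:ℂ)^2)
            + (((lam1 μ ξ * Complex.exp (lam2 μ ξ * t) - lam2 μ ξ * Complex.exp (lam1 μ ξ * t))
              / (lam1 μ ξ - lam2 μ ξ)) - 1) * (∑ b, QE ξ E0 a b * (ξ b : ℂ))
            + (∑ b, E0 a b * (ξ b : ℂ)) := by
        simp only [EhatSol, Fin.sum_univ_three]; ring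
      rw [h1', QE_dot ξ hξ E0 a, ← normsq ξ]
      ring
    rw [hEdot, projPerp_lin3 ξ _ _ _ u0 (fun a => projPerp ξ (fun c => ∑ b, E0 c b * (ξ b : ℂ)) a)
        (fun a => ∑ b, E0 a b * (ξ b : ℂ)) i,
      projPerp_of_dot ξ u0 hdiv i,
      projPerp_of_dot ξ _ (projPerp_dot ξ hξ (fun c => ∑ b, E0 c b * (ξ b : ℂ))) i]
    simp only [uhatSol]
    rw [projPerp_smul ξ Complex.I (fun a => ∑ b, E0 a b * (ξ b : ℂ)) i]
    linear_combination
      (-( ((lam1 μ ξ * Complex.exp (lam1 μ ξ * t) - lam2 μ ξ * Complex.exp (lam2 μ ξ * t))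
            / (lam1 μ ξ - lam2 μ ξ)) * u0 i
          + ((Complex.exp (lam1 μ ξ * t) - Complex.exp (lam2 μ ξ * t))
            / (lam1 μ ξ - lam2 μ ξ)) * Complex.I
            * projPerp ξ (fun c => ∑ b, E0 c b * (ξ b : ℂ)) i)) * hsum
      + (((Complex.exp (lam1 μ ξ * t) - Complex.exp (lam2 μ ξ * t))
            / (lam1 μ ξ - lam2 μ ξ)) * u0 i) * hprod
      + (((Complex.exp (lam1 μ ξ * t) - Complex.exp (lam2 μ ξ * t))
            / (lam1 μ ξ - lam2 μ ξ)) * ((‖ξ‖:ℂ)^2) * u0 i) * Complex.I_sq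
  · -- E equation
    intro t ht i j
    have h1 := expAux (lam1 μ ξ) t
    have h2 := expAux (lam2 μ ξ) t
    have hE : HasDerivAt (fun s : ℝ => EhatSol μ ξ u0 E0 s i j)
        (Complex.I * ((lam1 μ ξ * Complex.exp (lam1 μ ξ * t)
            - lam2 μ ξ * Complex.exp (lam2 μ ξ * t)) / (lam1 μ ξ - lam2 μ ξ)) * u0 i * (ξ j : ℂ)
          + ((lam1 μ ξ * (lam2 μ ξ * Complex.exp (lam2 μ ξ * t))
            - lam2 μ ξ * (lam1 μ ξ * Complex.exp (lam1 μ ξ * t))) / (lam1 μ ξ - lam2 μ ξ))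
            * QE ξ E0 i j) t := by
      exact (((((((h1.sub h2).div_const (lam1 μ ξ - lam2 μ ξ)).const_mul
          Complex.I).mul_const (u0 i)).mul_const ((ξ j : ℂ))).add
        ((((h2.const_mul (lam1 μ ξ)).sub (h1.const_mul (lam2 μ ξ))).div_const
          (lam1 μ ξ - lam2 μ ξ)).mul_const (QE ξ E0 i j))).add_const (E0 i j)).sub_const
          (QE ξ E0 i j)
    convert hE using 1
    have hQ := QE_mul ξ hξ E0 i j
    simp only [uhatSol]
    rw [projPerp_smul ξ Complex.I (fun a => ∑ b, E0 a b * (ξ b : ℂ)) i]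
    linear_combination
      (((Complex.exp (lam1 μ ξ * t) - Complex.exp (lam2 μ ξ * t)) / (lam1 μ ξ - lam2 μ ξ))
        * projPerp ξ (fun c => ∑ b, E0 c b * (ξ b : ℂ)) i * (ξ j : ℂ)) * Complex.I_sq
      + (((Complex.exp (lam1 μ ξ * t) - Complex.exp (lam2 μ ξ * t)) / (lam1 μ ξ - lam2 μ ξ))
          * QE ξ E0 i j) * hprod
      + ((Complex.exp (lam1 μ ξ * t) - Complex.exp (lam2 μ ξ * t)) / (lam1 μ ξ - lam2 μ ξ)) * hQ
  · -- initial data u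
    intro i
    simp only [uhatSol, Complex.ofReal_zero, mul_zero, Complex.exp_zero]
    field_simp
    ring
  · -- initial data E
    intro i j
    simp only [EhatSol, Complex.ofReal_zero, mul_zero, Complex.exp_zero]
    field_simp
    ring
  · -- divergence free
    intro t ht
    have hs : ∑ i, (ξ i : ℂ) * uhatSol μ ξ u0 E0 t i
        = ((lam1 μ ξ * Complex.exp (lam1 μ ξ * t) - lam2 μ ξ * Complex.exp (lam2 μ ξ * t))
            / (lam1 μ ξ - lam2 μ ξ)) * (∑ i, (ξ i : ℂ) * u0 i)
          + ((Complex.exp (lam1 μ ξ * t) - Complex.exp (lam2 μ ξ * t)) / (lam1 μ ξ - lam2 μ ξ))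
            * (∑ i, (ξ i : ℂ) * projPerp ξ (fun a => Complex.I * ∑ b, E0 a b * (ξ b : ℂ)) i) := by
      simp only [uhatSol, Fin.sum_univ_three]; ring
    rw [hs, hdiv, projPerp_dot ξ hξ]
    simp

end
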